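/- The sequence F(n) = \sum_{k=0}^n (-1)^k 8^{n-k} \binom{n}{k} \sum_{j=0}^k \binom{k}{j}^3 satisfies the recurrence (n+1)^2 F(n+1) - (17n^2+17n+6) F(n) + 72 n^2 F(n-1) = 0 for all n \ge 1, together with F(0) = 1 and F(1) = 6. -/

import Mathlib

def franel (k : ℕ) : ℤ := ∑ j ∈ Finset.range (k + 1), (k.choose j : ℤ) ^ 3

def certQ (k j : ℤ) : ℤ := -10 + 15*j - 6*j^2 - 20*k + 15*k*j - 10*k^2

def cert (k : ℕ) : ℕ → ℤ
  | 0 => 0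
  | j + 1 => (k.choose j : ℤ) ^ 3 * certQ k (j + 1) - 4 * (k : ℤ)^2 * ((k - 1).choose j : ℤ) ^ 3

lemma cert_step (k j : ℕ) :
    ((k : ℤ) + 1) ^ 2 * ((k + 1).choose j : ℤ) ^ 3
      - (7 * (k : ℤ)^2 + 7 * k + 2) * (k.choose j : ℤ) ^ 3
      - 8 * (k : ℤ)^2 * ((k - 1).choose j : ℤ) ^ 3
    = cert k (j + 1) - cert k j := by
  cases j with
  | zero =>
      simp only [cert, certQ, Nat.choose_zero_right]
      push_cast
      ring
  | succ jj =>
      cases k with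
      | zero =>
          cases jj with
          | zero => simp [cert, certQ]
          | succ m =>
              simp [cert, certQ, Nat.choose_eq_zero_of_lt (by omega : (0:ℕ) < m + 2),
                Nat.choose_eq_zero_of_lt (by omega : (1:ℕ) < m + 2),
                Nat.choose_eq_zero_of_lt (by omega : (0:ℕ) < m + 1)]
      | succ m =>
          have h1 : ((m + 1) + 1).choose (jj + 1) = (m+1).choose jj + (m+1).choose (jj+1) :=
            Nat.choose_succ_succ _ _
          have h2 : (m + 1).choose (jj + 1) = m.choose jj + m.choose (jj+1) :=
            Nat.choose_succ_succ _ _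
          have h3 : (m + 1) * m.choose jj = (m+1).choose (jj+1) * (jj+1) :=
            Nat.add_one_mul_choose_eq m jj
          have h4 : ((m+1) + 1) * (m+1).choose jj = ((m+1)+1).choose (jj+1) * (jj+1) :=
            Nat.add_one_mul_choose_eq (m+1) jj
          simp only [cert, certQ, Nat.succ_sub_one]
          -- cast to ℤ
          have h1' : (((m + 1) + 1).choose (jj + 1) : ℤ) = (m+1).choose jj + (m+1).choose (jj+1) := by exact_mod_cast h1
          have h2' : ((m + 1).choose (jj + 1) : ℤ) = m.choose jj + m.choose (jj+1) := by exact_mod_cast h2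
          have h3' : ((m : ℤ) + 1) * m.choose jj = (m+1).choose (jj+1) * (jj+1) := by exact_mod_cast h3
          have h4' : (((m : ℤ)+1) + 1) * (m+1).choose jj = ((m+1)+1).choose (jj+1) * (jj+1) := by exact_mod_cast h4
          set K : ℤ := (m : ℤ) + 1 with hK
          set J : ℤ := (jj : ℤ) + 1 with hJ
          set u1 : ℤ := (((m + 1) + 1).choose (jj + 1) : ℤ)
          set u2 : ℤ := ((m + 1).choose (jj + 1) : ℤ)
          set u3 : ℤ := (m.choose (jj + 1) : ℤ)
          set u4 : ℤ := ((m+1).choose jj : ℤ)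
          set u5 : ℤ := (m.choose jj : ℤ)
          -- h1' : u1 = u4 + u2 ; h2' : u2 = u5 + u3 ; h3' : K * u5 = u2 * J ; h4' : (K+1) * u4 = u1 * J
          push_cast
          linear_combination
            ((K+1)^2 * (u1^2 + u1*(u2+u4) + (u2+u4)^2)
              - J * ((9 - 6*J + 9*K)*u4^2 - 3*K*u3*u4 - 3*K*u3^2 + (-3 + 3*J)*u2*u4 - 3*J*u2*u3 + (-3 - 9*J)*u2^2)) * h1'
            + (4*K^2 * (u5^2 + u5*(u2-u3) + (u2-u3)^2)
              - K * ((-3 + 3*J - 3*K)*u4^2 + (-3 + 3*J - 3*K)*u3*u4 + (-3 + 6*J - 3*K)*u2*u4 + (3*J - 12*K)*u2*u3 + 15*J*u2^2)) * h2'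
            + (-((-3 + 3*J - 3*K)*u4^2 + (-3 + 3*J - 3*K)*u3*u4 + (-3 + 6*J - 3*K)*u2*u4 + (3*J - 12*K)*u2*u3 + 15*J*u2^2)) * h3'
            + (-((9 - 6*J + 9*K)*u4^2 - 3*K*u3*u4 - 3*K*u3^2 + (-3 + 3*J)*u2*u4 - 3*J*u2*u3 + (-3 - 9*J)*u2^2)) * h4'

lemma franel_rec (k : ℕ) :
    ((k : ℤ) + 1) ^ 2 * franel (k + 1)
      = (7 * (k : ℤ)^2 + 7 * k + 2) * franel k + 8 * (k : ℤ)^2 * franel (k - 1) := by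
  cases k with
  | zero => norm_num [franel, Finset.sum_range_succ]
  | succ m =>
      set k := m + 1 with hk
      have e1 : franel k = ∑ j ∈ Finset.range (k + 2), (k.choose j : ℤ) ^ 3 := by
        rw [Finset.sum_range_succ, Nat.choose_succ_self]
        simp [franel]
      have e2 : franel (k - 1) = ∑ j ∈ Finset.range (k + 2), ((k-1).choose j : ℤ) ^ 3 := by
        rw [Finset.sum_range_succ, Finset.sum_range_succ]
        have z1 : (k - 1).choose (k + 1) = 0 := Nat.choose_eq_zero_of_lt (by omega)
        have z2 : (k - 1).choose k = 0 := Nat.choose_eq_zero_of_lt (by omega)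
        simp [franel, hk, z1, z2, Nat.choose_eq_zero_of_lt (show m < m+1+1 by omega)]
      have e0 : franel (k + 1) = ∑ j ∈ Finset.range (k + 2), ((k+1).choose j : ℤ) ^ 3 := rfl
      have key : ((k : ℤ) + 1) ^ 2 * franel (k + 1)
          - ((7 * (k : ℤ)^2 + 7 * k + 2) * franel k + 8 * (k : ℤ)^2 * franel (k - 1))
          = ∑ j ∈ Finset.range (k + 2), (cert k (j + 1) - cert k j) := by
        rw [e0, e1, e2, Finset.mul_sum, Finset.mul_sum, Finset.mul_sum,
          ← Finset.sum_add_distrib, ← Finset.sum_sub_distrib]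
        exact Finset.sum_congr rfl fun j _ => by
          have := cert_step k j; linarith
      have tel : ∑ j ∈ Finset.range (k + 2), (cert k (j + 1) - cert k j)
          = cert k (k + 2) - cert k 0 := Finset.sum_range_sub (cert k) (k + 2)
      have z : cert k (k + 2) = 0 := by
        have z1 : k.choose (k + 1) = 0 := Nat.choose_succ_self k
        have z2 : (k - 1).choose (k + 1) = 0 := Nat.choose_eq_zero_of_lt (by omega)
        simp [cert, z1, z2, hk, Nat.choose_eq_zero_of_lt (show m < k+1 by omega),
          Nat.choose_eq_zero_of_lt (show m < m+1+1 by omega)]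
      rw [tel, z] at key
      simp only [cert] at key
      linarith

def bcoef (n k : ℕ) : ℤ := (-1)^k * 8^(n-k) * (n.choose k : ℤ)

lemma coefB (n k : ℕ) (hn : 1 ≤ n) (hk : k ≤ n + 1) :
    ((n : ℤ) + 1) ^ 2 * bcoef (n+1) k - (17 * (n:ℤ)^2 + 17*n + 6) * bcoef n k
      + 72 * (n:ℤ)^2 * bcoef (n-1) k
    = -(k:ℤ)^2 * bcoef n (k-1) + (7*(k:ℤ)^2 + 7*k + 2) * bcoef n k
      + 8 * ((k:ℤ)+1)^2 * bcoef n (k+1) := by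
  obtain ⟨m, rfl⟩ : ∃ m, n = m + 1 := ⟨n - 1, by omega⟩
  rcases Nat.eq_zero_or_pos k with rfl | hk1
  · -- k = 0
    simp only [bcoef, Nat.zero_sub, Nat.sub_zero, Nat.zero_add, Nat.add_sub_cancel,
      Nat.choose_zero_right, Nat.choose_one_right, pow_zero]
    push_cast
    ring
  · obtain ⟨kk, rfl⟩ : ∃ kk, k = kk + 1 := ⟨k - 1, by omega⟩
    rcases lt_trichotomy (kk + 1) (m + 1) with hlt | heq | hgt
    · -- 1 ≤ k ≤ n - 1 : n = k + d + 1
      obtain ⟨d, rfl⟩ : ∃ d, m = kk + d + 1 := ⟨m - kk - 1, by omega⟩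
      have e1 : (kk+d+1) + 1 + 1 - (kk + 1) = d + 2 := by omega
      have e2 : (kk+d+1) + 1 - (kk + 1) = d + 1 := by omega
      have e3 : (kk+d+1) + 1 - 1 - (kk + 1) = d := by omega
      have e3' : (kk+d+1) - (kk + 1) = d := by omega
      have e4 : (kk+d+1) + 1 - (kk + 1 - 1) = d + 2 := by omega
      have e4' : (kk+d+1) + 1 - kk = d + 2 := by omega
      have e5 : (kk+d+1) + 1 - (kk + 1 + 1) = d := by omega
      have e6 : kk + 1 - 1 = kk := by omega
      have e7 : (kk+d+1) + 1 - 1 = (kk+d+1) := by omega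
      have g1 : (((kk+d+1)+1) + 1).choose (kk+1) = ((kk+d+1)+1).choose kk + ((kk+d+1)+1).choose (kk+1) :=
        Nat.choose_succ_succ _ _
      have g2 : (((kk+d+1)+1) + 1) * ((kk+d+1)+1).choose kk = (((kk+d+1)+1)+1).choose (kk+1) * (kk+1) :=
        Nat.add_one_mul_choose_eq ((kk+d+1)+1) kk
      have g3 : ((kk+d+1)+1).choose (kk+1+1) * (kk+1+1) = ((kk+d+1)+1).choose (kk+1) * (((kk+d+1)+1) - (kk+1)) :=
        Nat.choose_succ_right_eq ((kk+d+1)+1) (kk+1)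
      have g4 : ((kk+d+1) + 1) * (kk+d+1).choose (kk+1) = ((kk+d+1)+1).choose (kk+1+1) * (kk+1+1) :=
        Nat.add_one_mul_choose_eq (kk+d+1) (kk+1)
      rw [e2] at g3
      have g1' : (((((kk+d+1)+1) + 1).choose (kk+1) : ℤ)) = ((kk+d+1)+1).choose kk + ((kk+d+1)+1).choose (kk+1) := by
        exact_mod_cast g1
      have g2' : ((((kk+d+1):ℤ)+1) + 1) * ((kk+d+1)+1).choose kk = ((((kk+d+1)+1)+1).choose (kk+1) : ℤ) * ((kk:ℤ)+1) := by
        exact_mod_cast g2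
      have g3' : (((kk+d+1)+1).choose (kk+1+1) : ℤ) * ((kk:ℤ)+1+1) = (((kk+d+1)+1).choose (kk+1) : ℤ) * ((d:ℤ)+1) := by
        exact_mod_cast g3
      have g4' : (((kk+d+1):ℤ) + 1) * ((kk+d+1).choose (kk+1) : ℤ) = (((kk+d+1)+1).choose (kk+1+1) : ℤ) * ((kk:ℤ)+1+1) := by
        exact_mod_cast g4
      simp only [bcoef, e1, e2, e3, e3', e4, e4', e5, e6, e7]
      push_cast
      linear_combination
        (-(-1:ℤ)^kk * 8^d * (256 + 256*(d:ℤ) + 64*(d:ℤ)^2 + 384*((kk:ℤ)+1) + 192*((kk:ℤ)+1)*(d:ℤ) + 192*((kk:ℤ)+1)^2)) * g1'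
        + (-(-1:ℤ)^kk * 8^d * (128 + 64*(d:ℤ) + 128*((kk:ℤ)+1))) * g2'
        + (-(-1:ℤ)^kk * 8^d * (80 + 72*(d:ℤ) + 80*((kk:ℤ)+1))) * g3'
        + (-(-1:ℤ)^kk * 8^d * (72 + 72*(d:ℤ) + 72*((kk:ℤ)+1))) * g4'
    · -- k = n
      have hm : kk = m := by omega
      subst hm
      have e1 : kk + 1 + 1 - (kk + 1) = 1 := by omega
      have e2 : kk + 1 - (kk + 1) = 0 := by omega
      have e3 : kk + 1 - 1 - (kk + 1) = 0 := by omega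
      have e4 : kk + 1 - (kk + 1 - 1) = 1 := by omega
      have e4' : kk + 1 - kk = 1 := by omega
      have e4'' : 1 + kk - kk = 1 := by omega
      have e5 : kk + 1 - (kk + 1 + 1) = 0 := by omega
      have e6 : kk + 1 - 1 = kk := by omega
      have c1 : ((kk+1) + 1).choose (kk+1) = kk + 2 := Nat.choose_succ_self_right (kk+1)
      have c2 : (kk+1).choose kk = kk + 1 := Nat.choose_succ_self_right kk
      have c3 : kk.choose (kk+1) = 0 := Nat.choose_succ_self kk
      have c4 : (kk+1).choose (kk+1+1) = 0 := Nat.choose_succ_self (kk+1)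
      simp only [bcoef, e1, e2, e3, e4, e4', e4'', e5, e6, c1, c2, c3, c4, Nat.choose_self,
        pow_zero, pow_one]
      push_cast
      ring
    · -- k = n + 1
      have hm : kk = m + 1 := by omega
      subst hm
      have e4 : m + 1 - (m + 1 + 1 - 1) = 0 := by omega
      have e6 : m + 1 + 1 - 1 = m + 1 := by omega
      have c1 : (m+1).choose (m+1+1) = 0 := Nat.choose_succ_self _
      have c2 : (m+1-1).choose (m+1+1) = 0 := Nat.choose_eq_zero_of_lt (by omega)
      have c3 : (m+1).choose (m+1+1+1) = 0 := Nat.choose_eq_zero_of_lt (by omega)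
      simp only [bcoef, e4, e6, c1, c2, c3, Nat.choose_self, Nat.sub_self,
        pow_zero]
      push_cast
      ring

/-- The sporadic sequence for the Zagier triple (17,6,72):
`F n = ∑ k, (-1)^k 8^(n-k) (n choose k) ∑ j, (k choose j)^3`. -/
def sporadicF (n : ℕ) : ℤ :=
  ∑ k ∈ Finset.range (n + 1),
    (-1 : ℤ) ^ k * 8 ^ (n - k) * (n.choose k : ℤ) *
      ∑ j ∈ Finset.range (k + 1), (k.choose j : ℤ) ^ 3

lemma sporadicF_eq (n : ℕ) :
    sporadicF n = ∑ k ∈ Finset.range (n + 1), bcoef n k * franel k := rfl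

theorem sporadicF_recurrence :
    sporadicF 0 = 1 ∧ sporadicF 1 = 6 ∧
      ∀ n : ℕ, 1 ≤ n →
        ((n : ℤ) + 1) ^ 2 * sporadicF (n + 1)
          - (17 * (n : ℤ) ^ 2 + 17 * n + 6) * sporadicF n
          + 72 * (n : ℤ) ^ 2 * sporadicF (n - 1) = 0 := by
  refine ⟨by norm_num [sporadicF, Finset.sum_range_succ], by norm_num [sporadicF, Finset.sum_range_succ], ?_⟩
  intro n hn
  obtain ⟨m, rfl⟩ : ∃ m, n = m + 1 := ⟨n - 1, by omega⟩
  set n := m + 1 with hn'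
  -- extend the three sums to range (n+2)
  have hF1 : sporadicF (n + 1) = ∑ k ∈ Finset.range (n + 2), bcoef (n+1) k * franel k :=
    sporadicF_eq (n+1)
  have hF2 : sporadicF n = ∑ k ∈ Finset.range (n + 2), bcoef n k * franel k := by
    rw [sporadicF_eq, Finset.sum_range_succ (f := fun k => bcoef n k * franel k) (n+1)]
    have h0 : bcoef n (n+1) = 0 := by
      simp [bcoef, Nat.choose_eq_zero_of_lt (show n < n + 1 by omega)]
    rw [h0, zero_mul, add_zero]
  have hF3 : sporadicF (n - 1) = ∑ k ∈ Finset.range (n + 2), bcoef (n-1) k * franel k := by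
    have hnm : n - 1 = m := by omega
    rw [hnm]
    have h1 : bcoef m (n+1) = 0 := by
      simp [bcoef, Nat.choose_eq_zero_of_lt (show m < n + 1 by omega)]
    have h2 : bcoef m n = 0 := by
      simp [bcoef, Nat.choose_eq_zero_of_lt (show m < n by omega)]
    rw [sporadicF_eq, Finset.sum_range_succ (f := fun k => bcoef m k * franel k) (n+1),
      Finset.sum_range_succ (f := fun k => bcoef m k * franel k) n]
    have hnn : m + 1 = n := rfl
    rw [hnn, h1, h2, zero_mul, zero_mul, add_zero, add_zero]
  rw [hF1, hF2, hF3, Finset.mul_sum, Finset.mul_sum, Finset.mul_sum]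
  rw [← Finset.sum_sub_distrib, ← Finset.sum_add_distrib]
  have step1 : ∀ k ∈ Finset.range (n + 2),
      ((n:ℤ) + 1)^2 * (bcoef (n+1) k * franel k)
        - (17*(n:ℤ)^2 + 17*n + 6) * (bcoef n k * franel k)
        + 72*(n:ℤ)^2 * (bcoef (n-1) k * franel k)
      = (-(k:ℤ)^2 * bcoef n (k-1) + (7*(k:ℤ)^2 + 7*k + 2) * bcoef n k
          + 8 * ((k:ℤ)+1)^2 * bcoef n (k+1)) * franel k := by
    intro k hk
    have hk' : k ≤ n + 1 := by
      have := Finset.mem_range.mp hk; omega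
    have := coefB n k (by omega) hk'
    linear_combination (franel k) * this
  rw [Finset.sum_congr rfl step1]
  -- split into three sums
  have split : ∑ k ∈ Finset.range (n + 2),
      (-(k:ℤ)^2 * bcoef n (k-1) + (7*(k:ℤ)^2 + 7*k + 2) * bcoef n k
        + 8 * ((k:ℤ)+1)^2 * bcoef n (k+1)) * franel k
    = (∑ k ∈ Finset.range (n + 2), -(k:ℤ)^2 * bcoef n (k-1) * franel k)
      + (∑ k ∈ Finset.range (n + 2), (7*(k:ℤ)^2 + 7*k + 2) * bcoef n k * franel k)
      + (∑ k ∈ Finset.range (n + 2), 8 * ((k:ℤ)+1)^2 * bcoef n (k+1) * franel k) := by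
    rw [← Finset.sum_add_distrib, ← Finset.sum_add_distrib]
    exact Finset.sum_congr rfl fun k _ => by ring
  rw [split]
  -- S1 : shift down
  have hS1 : (∑ k ∈ Finset.range (n + 2), -(k:ℤ)^2 * bcoef n (k-1) * franel k)
      = ∑ k ∈ Finset.range (n + 2), -(((k:ℤ)+1)^2 * bcoef n k * franel (k+1)) := by
    rw [Finset.sum_range_succ' (f := fun k => -(k:ℤ)^2 * bcoef n (k-1) * franel k) (n+1)]
    rw [Finset.sum_range_succ (f := fun k => -(((k:ℤ)+1)^2 * bcoef n k * franel (k+1))) (n+1)]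
    have hz : bcoef n (n+1) = 0 := by simp [bcoef, Nat.choose_succ_self]
    rw [hz]
    norm_num
  -- S3 : shift up
  have hS3 : (∑ k ∈ Finset.range (n + 2), 8 * ((k:ℤ)+1)^2 * bcoef n (k+1) * franel k)
      = ∑ k ∈ Finset.range (n + 2), 8 * (k:ℤ)^2 * bcoef n k * franel (k-1) := by
    rw [Finset.sum_range_succ' (f := fun k => 8 * (k:ℤ)^2 * bcoef n k * franel (k-1)) (n+1)]
    have hz : bcoef n (n+2) = 0 := by
      simp [bcoef, Nat.choose_eq_zero_of_lt (show n < n + 2 by omega)]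
    rw [Finset.sum_range_succ (f := fun k => 8 * ((k:ℤ)+1)^2 * bcoef n (k+1) * franel k) (n+1)]
    have e : n + 1 + 1 = n + 2 := rfl
    rw [e, hz]
    norm_num
  rw [hS1, hS3, ← Finset.sum_add_distrib, ← Finset.sum_add_distrib]
  have final : ∀ k ∈ Finset.range (n + 2),
      -(((k:ℤ)+1)^2 * bcoef n k * franel (k+1))
        + (7*(k:ℤ)^2 + 7*k + 2) * bcoef n k * franel k
        + 8 * (k:ℤ)^2 * bcoef n k * franel (k-1) = 0 := by
    intro k _
    have := franel_rec k
    linear_combination (-(bcoef n k)) * this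
  rw [Finset.sum_congr rfl final]
  simp
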